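/- Let 𝔤 be a Lie algebra over ℂ with a decomposition 𝔤 = 𝔯₋ ⊕ 𝔪 ⊕ 𝔯₊ where 𝔯₊ is an abelian Lie subalgebra, and let z be an element of the center of 𝔪 inside 𝔤 such that [z,x] = x for all x ∈ 𝔯₊. Then for any scalar c ∈ ℂ, setting z_c := z + c·1 in the universal enveloping algebra U(𝔤), the subspace 𝔯₊·z_c = {x z_c : x ∈ 𝔯₊} of U(𝔤) is an abelian Lie subalgebra: [x z_c, x' z_c] = 0 for all x, x' ∈ 𝔯₊. -/

import Mathlib

/-- If `𝔤 = 𝔯₋ ⊕ 𝔪 ⊕ 𝔯₊` with `𝔯₊` abelian and `z` in the center of `𝔪`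
satisfying `[z,x] = x` for all `x ∈ 𝔯₊`, then for any `c : ℂ`, setting
`z_c := ι z + c • 1` in `U(𝔤)`, the subspace `𝔯₊ · z_c` is abelian:
`[x z_c, x' z_c] = 0` for all `x, x' ∈ 𝔯₊`. -/
theorem stmt1 (g : Type*) [LieRing g] [LieAlgebra ℂ g]
    (rneg m rpos : LieSubalgebra ℂ g)
    (hdec : DirectSum.IsInternal ![rneg.toSubmodule, m.toSubmodule, rpos.toSubmodule])
    (habelian : ∀ x ∈ rpos, ∀ x' ∈ rpos, ⁅x, x'⁆ = 0)
    (z : g) (hzm : z ∈ m) (hzcentral : ∀ w ∈ m, ⁅z, w⁆ = 0)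
    (hzx : ∀ x ∈ rpos, ⁅z, x⁆ = x) (c : ℂ) :
    ∀ x ∈ rpos, ∀ x' ∈ rpos,
      let ι := UniversalEnvelopingAlgebra.ι ℂ (L := g)
      let zc : UniversalEnvelopingAlgebra ℂ g := ι z + algebraMap ℂ _ c
      (ι x * zc) * (ι x' * zc) - (ι x' * zc) * (ι x * zc) = 0 := by
  intro x hx x' hx' ι zc
  letI := LieRing.ofAssociativeRing (A := UniversalEnvelopingAlgebra ℂ g)
  letI := LieAlgebra.ofAssociativeAlgebra (R := ℂ) (A := UniversalEnvelopingAlgebra ℂ g)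
  -- key commutation relation: zc * ι a = ι a * zc + ι a for a ∈ rpos
  have key : ∀ a ∈ rpos, zc * ι a = ι a * zc + ι a := by
    intro a ha
    have h := (UniversalEnvelopingAlgebra.ι ℂ (L := g)).map_lie z a
    rw [hzx a ha, Ring.lie_def] at h
    have h' : ι z * ι a = ι a * ι z + ι a := by
      rw [add_comm]; exact sub_eq_iff_eq_add.mp h.symm
    have hc : algebraMap ℂ (UniversalEnvelopingAlgebra ℂ g) c * ι a
        = ι a * algebraMap ℂ _ c := Algebra.commutes c (ι a)
    show (ι z + algebraMap ℂ _ c) * ι a = ι a * (ι z + algebraMap ℂ _ c) + ι a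
    rw [add_mul, mul_add, hc, h']
    abel
  have hcomm : ι x * ι x' = ι x' * ι x := by
    have h := (UniversalEnvelopingAlgebra.ι ℂ (L := g)).map_lie x x'
    rw [habelian x hx x' hx', Ring.lie_def, map_zero] at h
    exact sub_eq_zero.mp h.symm
  have L : (ι x * zc) * (ι x' * zc) = (ι x * ι x' * zc + ι x * ι x') * zc := by
    have h1 : (ι x * zc) * (ι x' * zc) = ι x * (zc * ι x') * zc := by noncomm_ring
    rw [h1, key x' hx']; noncomm_ring
  have R : (ι x' * zc) * (ι x * zc) = (ι x' * ι x * zc + ι x' * ι x) * zc := by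
    have h1 : (ι x' * zc) * (ι x * zc) = ι x' * (zc * ι x) * zc := by noncomm_ring
    rw [h1, key x hx]; noncomm_ring
  rw [L, R, hcomm, sub_self]
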